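/- Let a, x, b ∈ ℝ with b ≠ 0 and (a−x)·b < 0. Then ∫₀^∞ t · (|a−x|/t^{3/2}) φ((a + bt − x)/√t) dt = |a−x|/|b|. (The expectation of the first-passage time of Brownian motion starting at x through the line a + bt equals |a−x|/|b|.) -/

import Mathlib

open Real MeasureTheory Set Filter

/-- Standard Gaussian density φ(z) = (1/√(2π)) e^{−z²/2}. -/
noncomputable def gaussPdf (z : ℝ) : ℝ := (1 / Real.sqrt (2 * π)) * Real.exp (-z ^ 2 / 2)

/-- Standard Gaussian distribution function Φ(y) = ∫_{−∞}^y φ(z) dz. -/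
noncomputable def gaussCdf (y : ℝ) : ℝ := ∫ z in Set.Iio y, gaussPdf z

/-- ψ_t(u) = (e^{−b²u/2}/(π√(u(t−u)))) · [ e^{−b²(t−u)/2}
      + (b/2)·√(2π(t−u)) · (2Φ(b√(t−u)) − 1) ]. -/
noncomputable def psi (b t u : ℝ) : ℝ :=
  (Real.exp (-b ^ 2 * u / 2) / (π * Real.sqrt (u * (t - u)))) *
    (Real.exp (-b ^ 2 * (t - u) / 2) +
      (b / 2) * Real.sqrt (2 * π * (t - u)) *
        (2 * gaussCdf (b * Real.sqrt (t - u)) - 1))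

/-- Inverse Gaussian first-passage density f_{τ₁}(t) = (|a−x|/t^{3/2}) φ((a+bt−x)/√t). -/
noncomputable def invGaussPdf (a x b t : ℝ) : ℝ :=
  (|a - x| / t ^ ((3 : ℝ) / 2)) * gaussPdf ((a + b * t - x) / Real.sqrt t)


lemma gaussPdf_even (z : ℝ) : gaussPdf (-z) = gaussPdf z := by
  simp [gaussPdf, neg_pow]

lemma gaussPdf_nonneg (z : ℝ) : 0 ≤ gaussPdf z := by
  have : (0:ℝ) ≤ 1 / Real.sqrt (2 * π) := by positivity
  exact mul_nonneg this (Real.exp_nonneg _)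

lemma gaussPdf_eq (z : ℝ) : gaussPdf z = (1 / Real.sqrt (2 * π)) * Real.exp (-(1/2) * z ^ 2) := by
  unfold gaussPdf
  congr 1
  ring_nf

lemma integrable_gaussPdf : Integrable gaussPdf := by
  rw [funext gaussPdf_eq]
  exact (integrable_exp_neg_mul_sq (by norm_num : (0:ℝ) < 1/2)).const_mul _

lemma integral_gaussPdf : ∫ z : ℝ, gaussPdf z = 1 := by
  rw [funext gaussPdf_eq]
  simp only []
  rw [integral_const_mul, integral_gaussian]
  rw [show π / (1/2) = 2 * π by ring]
  have : Real.sqrt (2 * π) ≠ 0 := by positivity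
  field_simp


lemma continuous_gaussPdf : Continuous gaussPdf := by
  unfold gaussPdf
  continuity

lemma measurable_aux (b c : ℝ) : AEStronglyMeasurable (fun u : ℝ => gaussPdf (b * u - c / u)) (volume.restrict (Ioi 0)) :=
  (continuous_gaussPdf.measurable.comp
    ((measurable_id.const_mul b).sub (measurable_const.div measurable_id))).aestronglyMeasurable

lemma key (b c : ℝ) (hb : 0 < b) (hc : 0 < c) :
    ∫ u in Ioi (0:ℝ), gaussPdf (b * u - c / u) = 1 / (2 * b) := by
  set h : ℝ → ℝ := fun u => b * u - c / u with hh
  set h' : ℝ → ℝ := fun u => b + c / u ^ 2 with hh'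
  have hderiv : ∀ u ∈ Ioi (0:ℝ), HasDerivWithinAt h (h' u) (Ioi 0) u := by
    intro u hu
    have hu0 : u ≠ 0 := ne_of_gt hu
    have d1 : HasDerivAt h (b * 1 - (c * (-(u ^ 2)⁻¹))) u := by
      have : HasDerivAt (fun v : ℝ => c / v) (c * (-(u ^ 2)⁻¹)) u := by
        simpa [div_eq_mul_inv] using (hasDerivAt_inv hu0).const_mul c
      exact ((hasDerivAt_id u).const_mul b).sub this
    have : b * 1 - c * (-(u ^ 2)⁻¹) = h' u := by
      simp only [hh']
      field_simp
      ring
    rw [this] at d1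
    exact d1.hasDerivWithinAt
  have hinj : InjOn h (Ioi 0) := by
    intro u hu v hv e
    have hu0 : (0:ℝ) < u := hu
    have hv0 : (0:ℝ) < v := hv
    simp only [hh] at e
    have e2 : (u - v) * (b * u * v + c) = 0 := by
      field_simp at e
      nlinarith [e]
    rcases mul_eq_zero.mp e2 with h1 | h1
    · linarith
    · nlinarith [mul_pos (mul_pos hb hu0) hv0]
  have himg : h '' (Ioi 0) = univ := by
    apply eq_univ_of_forall
    intro y
    set s := Real.sqrt (y ^ 2 + 4 * b * c) with hs
    have hs2 : s ^ 2 = y ^ 2 + 4 * b * c := Real.sq_sqrt (by positivity)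
    have hsy : -y < s := by
      nlinarith [Real.sqrt_nonneg (y ^ 2 + 4 * b * c), hs2]
    refine ⟨(y + s) / (2 * b), ?_, ?_⟩
    · show (0:ℝ) < (y + s) / (2 * b)
      apply div_pos (by linarith) (by linarith)
    · show b * ((y + s) / (2 * b)) - c / ((y + s) / (2 * b)) = y
      have hys : 0 < y + s := by linarith
      field_simp
      nlinarith [hs2]
  have habs : ∀ u ∈ Ioi (0:ℝ), |h' u| = b + c / u ^ 2 := by
    intro u hu
    have hu0 : (0:ℝ) < u := hu
    have : (0:ℝ) < h' u := by
      simp only [hh']; positivity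
    simp [abs_of_pos this, hh']
    positivity
  have e1 : (1:ℝ) = ∫ u in Ioi (0:ℝ), |h' u| • gaussPdf (h u) := by
    rw [← integral_gaussPdf, ← setIntegral_univ, ← himg]
    exact integral_image_eq_integral_abs_deriv_smul measurableSet_Ioi hderiv hinj _
  have int_total : IntegrableOn (fun u => |h' u| • gaussPdf (h u)) (Ioi 0) := by
    rw [← integrableOn_image_iff_integrableOn_abs_deriv_smul measurableSet_Ioi hderiv hinj]
    rw [himg]
    exact integrable_gaussPdf.integrableOn
  -- integrability of the two pieces
  have meas1 : AEStronglyMeasurable (fun u : ℝ => gaussPdf (h u)) (volume.restrict (Ioi 0)) :=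
    measurable_aux b c
  have int1 : IntegrableOn (fun u => b * gaussPdf (h u)) (Ioi 0) := by
    apply Integrable.mono' int_total (meas1.const_mul b)
    filter_upwards [ae_restrict_mem measurableSet_Ioi] with u hu
    have hu0 : (0:ℝ) < u := hu
    rw [Real.norm_eq_abs, abs_of_nonneg (mul_nonneg hb.le (gaussPdf_nonneg _)),
      habs u hu, smul_eq_mul]
    have : (0:ℝ) ≤ c / u ^ 2 := by positivity
    nlinarith [gaussPdf_nonneg (h u)]
  have int2 : IntegrableOn (fun u => (c / u ^ 2) * gaussPdf (h u)) (Ioi 0) := by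
    apply Integrable.mono' int_total
    · exact ((measurable_const.div (measurable_id.pow_const 2)).aestronglyMeasurable.mul meas1)
    filter_upwards [ae_restrict_mem measurableSet_Ioi] with u hu
    have hu0 : (0:ℝ) < u := hu
    have hcu : (0:ℝ) ≤ c / u ^ 2 := by positivity
    rw [Real.norm_eq_abs, abs_of_nonneg (mul_nonneg hcu (gaussPdf_nonneg _)),
      habs u hu, smul_eq_mul]
    nlinarith [gaussPdf_nonneg (h u)]
  have esplit : (1:ℝ) = b * (∫ u in Ioi (0:ℝ), gaussPdf (h u))
      + ∫ u in Ioi (0:ℝ), (c / u ^ 2) * gaussPdf (h u) := by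
    rw [e1, ← integral_const_mul]
    rw [← integral_add int1 int2]
    apply setIntegral_congr_fun measurableSet_Ioi
    intro u hu
    simp only [smul_eq_mul]
    rw [habs u hu]
    ring
  -- second substitution : J = b * I
  have hrefl : (∫ u in Ioi (0:ℝ), (c / u ^ 2) * gaussPdf (h u))
      = b * ∫ u in Ioi (0:ℝ), gaussPdf (h u) := by
    set k : ℝ → ℝ := fun v => c / (b * v) with hk
    set k' : ℝ → ℝ := fun v => -(c / b) / v ^ 2 with hk'
    have hkime : k '' (Ioi 0) = Ioi 0 := by
      apply Subset.antisymm
      · rintro _ ⟨v, hv, rfl⟩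
        have hv0 : (0:ℝ) < v := hv
        show (0:ℝ) < c / (b * v)
        positivity
      · intro w hw
        have hw0 : (0:ℝ) < w := hw
        refine ⟨c / (b * w), by show (0:ℝ) < c / (b * w); positivity, ?_⟩
        show c / (b * (c / (b * w))) = w
        field_simp
    have hkderiv : ∀ v ∈ Ioi (0:ℝ), HasDerivWithinAt k (k' v) (Ioi 0) v := by
      intro v hv
      have hv0 : v ≠ 0 := ne_of_gt hv
      have : HasDerivAt k ((c / b) * (-(v ^ 2)⁻¹)) v := by
        have := (hasDerivAt_inv hv0).const_mul (c / b)
        have heq : (fun v : ℝ => c / b * v⁻¹) = k := by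
          funext w; simp only [hk]; ring
        rw [heq] at this
        exact this
      have heq2 : (c / b) * (-(v ^ 2)⁻¹) = k' v := by
        simp [hk']; ring
      rw [heq2] at this
      exact this.hasDerivWithinAt
    have hkinj : InjOn k (Ioi 0) := by
      intro u hu v hv e
      have hu0 : (0:ℝ) < u := hu
      have hv0 : (0:ℝ) < v := hv
      simp only [hk] at e
      have hbu : b * u ≠ 0 := by positivity
      have hbv : b * v ≠ 0 := by positivity
      have : (b * u)⁻¹ = (b * v)⁻¹ := by
        have e2 : c * (b * u)⁻¹ = c * (b * v)⁻¹ := by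
          simpa [div_eq_mul_inv] using e
        exact mul_left_cancel₀ hc.ne' e2
      have : b * u = b * v := inv_injective this
      exact mul_left_cancel₀ hb.ne' this
    have := integral_image_eq_integral_abs_deriv_smul measurableSet_Ioi hkderiv hkinj
      (fun u => (c / u ^ 2) * gaussPdf (h u))
    rw [hkime] at this
    rw [this, ← integral_const_mul]
    apply setIntegral_congr_fun measurableSet_Ioi
    intro v hv
    have hv0 : (0:ℝ) < v := hv
    have hkv : k v = c / (b * v) := rfl
    simp only [smul_eq_mul]
    have hkabs : |k' v| = (c / b) / v ^ 2 := by
      simp only [hk']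
      rw [abs_div, abs_neg, abs_of_nonneg (by positivity : (0:ℝ) ≤ c / b),
        abs_of_nonneg (by positivity : (0:ℝ) ≤ v ^ 2)]
    have hhk : h (k v) = -(h v) := by
      simp only [hh, hkv]
      field_simp
      ring
    have hkv2 : c / (k v) ^ 2 = b ^ 2 * v ^ 2 / c := by
      rw [hkv]; field_simp
    rw [hkabs, hhk, gaussPdf_even, hkv2]
    field_simp
  rw [hrefl] at esplit
  have hI : (∫ u in Ioi (0:ℝ), gaussPdf (h u)) = 1 / (2 * b) := by
    have hb2 : (2:ℝ) * b ≠ 0 := by positivity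
    field_simp at esplit ⊢
    linarith
  exact hI

theorem stmt8 (a x b : ℝ) (hb : b ≠ 0) (h : (a - x) * b < 0) :
    ∫ t in Set.Ioi (0 : ℝ),
        t * ((|a - x| / t ^ ((3 : ℝ) / 2)) * gaussPdf ((a + b * t - x) / Real.sqrt t))
      = |a - x| / |b| := by
  set c := |a - x| with hcdef
  set β := |b| with hβdef
  have hβ : 0 < β := abs_pos.mpr hb
  have hax : a - x ≠ 0 := by
    intro h0
    rw [h0, zero_mul] at h
    exact lt_irrefl _ h
  have hc : 0 < c := abs_pos.mpr hax
  set g : ℝ → ℝ := fun t => c * (Real.sqrt t)⁻¹ * gaussPdf (β * Real.sqrt t - c / Real.sqrt t)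
    with hg
  have hpt : ∀ t ∈ Ioi (0:ℝ),
      t * ((|a - x| / t ^ ((3:ℝ)/2)) * gaussPdf ((a + b * t - x) / Real.sqrt t)) = g t := by
    intro t ht
    have ht0 : (0:ℝ) < t := ht
    have hst : 0 < Real.sqrt t := Real.sqrt_pos.mpr ht0
    have hts : Real.sqrt t * Real.sqrt t = t := Real.mul_self_sqrt ht0.le
    have h32 : t ^ ((3:ℝ)/2) = t * Real.sqrt t := by
      rw [show ((3:ℝ)/2) = 1 + 1/2 by norm_num, Real.rpow_add ht0, Real.rpow_one,
        ← Real.sqrt_eq_rpow]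
    have harg : gaussPdf ((a + b * t - x) / Real.sqrt t)
        = gaussPdf (β * Real.sqrt t - c / Real.sqrt t) := by
      rcases lt_or_gt_of_ne hb with hbneg | hbpos
      · have hax2 : 0 < a - x := by nlinarith
        have hceq : c = a - x := abs_of_pos hax2
        have hβeq : β = -b := abs_of_neg hbneg
        have : (a + b * t - x) / Real.sqrt t = -(β * Real.sqrt t - c / Real.sqrt t) := by
          rw [hβeq, hceq]
          field_simp
          linear_combination (-b) * hts
        rw [this, gaussPdf_even]
      · have hax2 : a - x < 0 := by nlinarith
        have hceq : c = -(a - x) := abs_of_neg hax2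
        have hβeq : β = b := abs_of_pos hbpos
        have : (a + b * t - x) / Real.sqrt t = β * Real.sqrt t - c / Real.sqrt t := by
          rw [hβeq, hceq]
          field_simp
          linear_combination (-b) * hts
        rw [this]
    rw [← hcdef, harg, h32, hg]
    field_simp
  calc ∫ t in Ioi (0:ℝ),
        t * ((|a - x| / t ^ ((3:ℝ)/2)) * gaussPdf ((a + b * t - x) / Real.sqrt t))
      = ∫ t in Ioi (0:ℝ), g t := setIntegral_congr_fun measurableSet_Ioi hpt
    _ = ∫ u in Ioi (0:ℝ), (|(2:ℝ)| * u ^ ((2:ℝ) - 1)) • g (u ^ (2:ℝ)) :=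
        (integral_comp_rpow_Ioi g two_ne_zero).symm
    _ = ∫ u in Ioi (0:ℝ), (2 * c) * gaussPdf (β * u - c / u) := by
        apply setIntegral_congr_fun measurableSet_Ioi
        intro u hu
        have hu0 : (0:ℝ) < u := hu
        have h1 : u ^ ((2:ℝ) - 1) = u := by
          norm_num
        have h2 : u ^ ((2:ℝ)) = u ^ (2:ℕ) := by
          rw [← Real.rpow_natCast u 2]; norm_num
        have h3 : Real.sqrt (u ^ (2:ℕ)) = u := by
          rw [sq]; exact Real.sqrt_mul_self hu0.le
        simp only [smul_eq_mul, hg]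
        rw [h1, h2, h3]
        rw [abs_of_nonneg (by norm_num : (0:ℝ) ≤ 2)]
        field_simp
    _ = (2 * c) * ∫ u in Ioi (0:ℝ), gaussPdf (β * u - c / u) := integral_const_mul _ _
    _ = (2 * c) * (1 / (2 * β)) := by rw [key β c hβ hc]
    _ = c / β := by
        field_simp
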